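/- arXiv:2009.04542 — 2 statements merged into one kernel-verified Lean document; each statement's English description precedes it below -/
import Mathlib

section
/- Under the stated hypotheses, for all m ≥ 1 and all k, l ∈ ℤ: [H_m, [B_k, B_{l+1}]_{v^{−2}} + [B_l, B_{k+1}]_{v^{−2}}] = 0. -/
noncomputable section

abbrev F : Type := RatFunc ℚ

def v : F := RatFunc.X

def qnum (n : ℤ) : F := (v ^ n - v ^ (-n)) / (v - v⁻¹)

/-- The `v`-commutator `[x,y]_{v^a} = xy − v^a yx` in an `F`-algebra. -/
def qc {A : Type} [Ring A] [Algebra F A] (x y : A) (a : ℤ) : A := x * y - (v ^ a) • (y * x)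

set_option maxHeartbeats 1000000 in
/-- `[H_m, [B_k, B_{l+1}]_{v⁻²} + [B_l, B_{k+1}]_{v⁻²}] = 0`. -/
theorem stmt17 (A : Type) [Ring A] [Algebra F A] (C K : Aˣ)
    (hC : ∀ x : A, (C : A) * x = x * C) (hK : ∀ x : A, (K : A) * x = x * K)
    (B : ℤ → A) (Θ : ℤ → A)
    (h0 : Θ 0 = ((v - v⁻¹)⁻¹ : F) • (1 : A)) (hneg : ∀ n : ℤ, n < 0 → Θ n = 0)
    (hrel : ∀ k l : ℤ,
      qc (B k) (B (l + 1)) (-2) - (v ^ (-2 : ℤ)) • qc (B (k + 1)) (B l) 2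
      = (v ^ (-2 : ℤ)) • (Θ (l - k + 1) * ((C ^ k * K : Aˣ) : A))
        - (v ^ (-4 : ℤ)) • (Θ (l - k - 1) * ((C ^ (k + 1) * K : Aˣ) : A))
        + (v ^ (-2 : ℤ)) • (Θ (k - l + 1) * ((C ^ l * K : Aˣ) : A))
        - (v ^ (-4 : ℤ)) • (Θ (k - l - 1) * ((C ^ (l + 1) * K : Aˣ) : A)))
    (H : ℕ → A) (c : ℤ)
    (hH : ∀ m : ℕ, 1 ≤ m → ∀ l : ℤ,
      H m * B l - B l * H m
      = (qnum (m * c) / (m : F)) • B (l + m)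
        - (qnum (m * c) / (m : F)) • (B (l - m) * ((C ^ m : Aˣ) : A)))
    (m : ℕ) (hm : 1 ≤ m) (k l : ℤ) :
    H m * (qc (B k) (B (l + 1)) (-2) + qc (B l) (B (k + 1)) (-2))
      - (qc (B k) (B (l + 1)) (-2) + qc (B l) (B (k + 1)) (-2)) * H m = 0 := by
  have hvne : (v : F) ≠ 0 := RatFunc.X_ne_zero
  set Cm : A := ((C ^ m : Aˣ) : A) with hCmdef
  have hCmx : ∀ x : A, Cm * x = x * Cm := by
    intro x
    have h1 : Commute ((C : A)) x := hC x
    have h2 := h1.pow_left m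
    rw [hCmdef, Units.val_pow_eq_pow_val]
    exact h2
  set rr : F := qnum ((m : ℤ) * c) / (m : F) with hrrdef
  set D : ℤ → A := fun a => rr • B (a + (m : ℤ)) - rr • (B (a - (m : ℤ)) * Cm) with hDdef
  have hHB : ∀ a : ℤ, H m * B a = D a + B a * H m := by
    intro a
    have h := hH m hm a
    rw [sub_eq_iff_eq_add] at h
    simp only [hDdef, hrrdef, hCmdef]
    exact h
  have key : ∀ x y dx dy : A, H m * x = dx + x * H m → H m * y = dy + y * H m →
      H m * (x * y) - (x * y) * H m = dx * y + x * dy := by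
    intro x y dx dy hx hy
    rw [← mul_assoc, hx, add_mul, mul_assoc, hy, mul_add, ← mul_assoc]
    abel
  have hBB : ∀ a b : ℤ, H m * (B a * B b) - (B a * B b) * H m = D a * B b + B a * D b :=
    fun a b => key _ _ _ _ (hHB a) (hHB b)
  have hqc : ∀ a b : ℤ, H m * qc (B a) (B b) (-2) - qc (B a) (B b) (-2) * H m
      = (D a * B b + B a * D b) - (v ^ (-2 : ℤ)) • (D b * B a + B b * D a) := by
    intro a b
    calc H m * qc (B a) (B b) (-2) - qc (B a) (B b) (-2) * H m
        = (H m * (B a * B b) - (B a * B b) * H m)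
          - (v ^ (-2 : ℤ)) • (H m * (B b * B a) - (B b * B a) * H m) := by
          simp only [qc, mul_sub, sub_mul, mul_smul_comm, smul_mul_assoc, smul_sub]
          abel
      _ = _ := by rw [hBB a b, hBB b a]
  have hv1 : (v : F) ^ (-2 : ℤ) * v ^ (2 : ℤ) = 1 := by
    rw [← zpow_add₀ hvne]; norm_num
  have hS : ∀ a b : ℤ, qc (B a) (B (b + 1)) (-2) + qc (B b) (B (a + 1)) (-2)
      = (v ^ (-2 : ℤ)) • (Θ (b - a + 1) * ((C ^ a * K : Aˣ) : A))
        - (v ^ (-4 : ℤ)) • (Θ (b - a - 1) * ((C ^ (a + 1) * K : Aˣ) : A))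
        + (v ^ (-2 : ℤ)) • (Θ (a - b + 1) * ((C ^ b * K : Aˣ) : A))
        - (v ^ (-4 : ℤ)) • (Θ (a - b - 1) * ((C ^ (b + 1) * K : Aˣ) : A)) := by
    intro a b
    rw [← hrel a b]
    simp only [qc, smul_sub, smul_smul, hv1, one_smul]
    abel
  have hCKu : Commute C K := by
    apply Units.ext
    simp only [Units.val_mul]
    exact (hK (C : A)).symm
  have hu : ∀ e : ℤ, ((C ^ e * K : Aˣ) : A) * Cm = ((C ^ (e + (m : ℤ)) * K : Aˣ) : A) := by
    intro e
    rw [hCmdef, ← Units.val_mul]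
    congr 1
    rw [mul_assoc, (hCKu.symm.pow_right m).eq, ← mul_assoc, ← zpow_natCast C m, ← zpow_add]
  have hmove : ∀ a b : ℤ, B a * Cm * B b = B a * B b * Cm := by
    intro a b
    rw [mul_assoc, hCmx, ← mul_assoc]
  -- the two Γ-identities
  have hG1 : ∀ a b : ℤ,
      qc (B (a + (m : ℤ))) (B (b + 1)) (-2) + qc (B b) (B (a + (m : ℤ) + 1)) (-2)
      = (qc (B a) (B (b - (m : ℤ) + 1)) (-2) + qc (B (b - (m : ℤ))) (B (a + 1)) (-2)) * Cm := by
    intro a b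
    rw [hS (a + (m : ℤ)) b, hS a (b - (m : ℤ))]
    simp only [sub_mul, add_mul, smul_mul_assoc, mul_assoc, hu]
    ring_nf
  have hG2 : ∀ a b : ℤ,
      qc (B a) (B (b + (m : ℤ) + 1)) (-2) + qc (B (b + (m : ℤ))) (B (a + 1)) (-2)
      = (qc (B (a - (m : ℤ))) (B (b + 1)) (-2) + qc (B b) (B (a - (m : ℤ) + 1)) (-2)) * Cm := by
    intro a b
    rw [hS a (b + (m : ℤ)), hS (a - (m : ℤ)) b]
    simp only [sub_mul, add_mul, smul_mul_assoc, mul_assoc, hu]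
    ring_nf
  have step1 : H m * (qc (B k) (B (l + 1)) (-2) + qc (B l) (B (k + 1)) (-2))
      - (qc (B k) (B (l + 1)) (-2) + qc (B l) (B (k + 1)) (-2)) * H m
      = ((D k * B (l + 1) + B k * D (l + 1))
          - (v ^ (-2 : ℤ)) • (D (l + 1) * B k + B (l + 1) * D k))
        + ((D l * B (k + 1) + B l * D (k + 1))
          - (v ^ (-2 : ℤ)) • (D (k + 1) * B l + B (k + 1) * D l)) := by
    calc H m * (qc (B k) (B (l + 1)) (-2) + qc (B l) (B (k + 1)) (-2))
        - (qc (B k) (B (l + 1)) (-2) + qc (B l) (B (k + 1)) (-2)) * H m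
        = (H m * qc (B k) (B (l + 1)) (-2) - qc (B k) (B (l + 1)) (-2) * H m)
          + (H m * qc (B l) (B (k + 1)) (-2) - qc (B l) (B (k + 1)) (-2) * H m) := by
          rw [mul_add, add_mul]; abel
      _ = _ := by rw [hqc k (l + 1), hqc l (k + 1)]
  have step2 : ((D k * B (l + 1) + B k * D (l + 1))
          - (v ^ (-2 : ℤ)) • (D (l + 1) * B k + B (l + 1) * D k))
        + ((D l * B (k + 1) + B l * D (k + 1))
          - (v ^ (-2 : ℤ)) • (D (k + 1) * B l + B (k + 1) * D l))
      = rr • ((qc (B (k + (m : ℤ))) (B (l + 1)) (-2) + qc (B l) (B (k + (m : ℤ) + 1)) (-2))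
              + (qc (B k) (B (l + (m : ℤ) + 1)) (-2) + qc (B (l + (m : ℤ))) (B (k + 1)) (-2)))
        - rr • (((qc (B (k - (m : ℤ))) (B (l + 1)) (-2) + qc (B l) (B (k - (m : ℤ) + 1)) (-2))
              + (qc (B k) (B (l - (m : ℤ) + 1)) (-2) + qc (B (l - (m : ℤ))) (B (k + 1)) (-2))) * Cm) := by
    simp only [hDdef]
    simp only [qc, sub_mul, mul_sub, add_mul, mul_add, smul_mul_assoc, mul_smul_comm,
      smul_sub, smul_add, smul_smul, ← mul_assoc]
    rw [show l + 1 + (m : ℤ) = l + (m : ℤ) + 1 by ring,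
      show k + 1 + (m : ℤ) = k + (m : ℤ) + 1 by ring,
      show l + 1 - (m : ℤ) = l - (m : ℤ) + 1 by ring,
      show k + 1 - (m : ℤ) = k - (m : ℤ) + 1 by ring]
    simp only [hmove]
    rw [mul_comm (v ^ (-2 : ℤ)) rr]
    abel
  rw [step1, step2, hG1 k l, hG2 k l]
  simp only [add_mul, smul_add]
  abel
end
end

section
/- Under the stated hypotheses, [H_m, Θ_n] = 0 and [H_m, H'_n] = 0 for all m, n ≥ 1. -/
noncomputable section

lemma v_ne_zero : v ≠ 0 := RatFunc.X_ne_zero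

lemma v_sub_inv_ne_zero : (v - v⁻¹ : F) ≠ 0 := by
  intro h
  have h1 : (v : F) = v⁻¹ := sub_eq_zero.mp h
  have h2 : (v : F) * v = 1 := by
    nth_rewrite 1 [h1]
    exact inv_mul_cancel₀ v_ne_zero
  have h3 : (algebraMap (Polynomial ℚ) F) (Polynomial.X * Polynomial.X) =
      (algebraMap (Polynomial ℚ) F) 1 := by
    simpa [v, RatFunc.algebraMap_X] using h2
  have h4 := RatFunc.algebraMap_injective ℚ h3
  have h5 := congrArg (Polynomial.eval 0) h4
  simp at h5

lemma F_two_ne_zero : (2 : F) ≠ 0 := by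
  intro h
  have h2 : (algebraMap (Polynomial ℚ) F) 2 = algebraMap (Polynomial ℚ) F 0 := by
    rw [map_ofNat, map_zero]; exact h
  have h3 := RatFunc.algebraMap_injective ℚ h2
  norm_num at h3

lemma Fsmul_cancel {A : Type} [AddCommGroup A] [Module F A] {s : F} (hs : s ≠ 0)
    {x : A} (h : s • x = 0) : x = 0 := by
  have := congrArg (fun y => s⁻¹ • y) h
  simpa [smul_smul, inv_mul_cancel₀ hs] using this

section Com

set_option linter.unusedSectionVars false

variable {A : Type} [Ring A] [Algebra F A]

def com (h x : A) : A := h * x - x * h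

lemma com_mul (h x y : A) : com h (x * y) = com h x * y + x * com h y := by
  simp only [com]; noncomm_ring

lemma com_smul (h : A) (s : F) (x : A) : com h (s • x) = s • com h x := by
  simp only [com, mul_smul_comm, smul_mul_assoc, smul_sub]

lemma com_add (h x y : A) : com h (x + y) = com h x + com h y := by
  simp only [com]; noncomm_ring

lemma com_sub (h x y : A) : com h (x - y) = com h x - com h y := by
  simp only [com]; noncomm_ring

lemma com_zero (h : A) : com h 0 = 0 := by simp [com]

lemma com_unit (h : A) {u : A} (hu : ∀ z, u * z = z * u) (x : A) :
    com h (x * u) = com h x * u := by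
  simp only [com, sub_mul, mul_assoc, hu h]

lemma com_qc (h x y : A) (t : ℤ) :
    com h (qc x y t) = qc (com h x) y t + qc x (com h y) t := by
  rw [qc, com_sub, com_smul, com_mul, com_mul, qc, qc, smul_add]
  abel

lemma com_sum (h : A) {ι : Type*} (s : Finset ι) (f : ι → A) :
    com h (∑ i ∈ s, f i) = ∑ i ∈ s, com h (f i) := by
  simp only [com, Finset.mul_sum, Finset.sum_mul, ← Finset.sum_sub_distrib]

lemma com_eq_zero_of_commute {h x : A} (hx : Commute h x) : com h x = 0 :=
  sub_eq_zero.mpr hx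

lemma commute_of_com_eq_zero {h x : A} (hx : com h x = 0) : Commute h x :=
  sub_eq_zero.mp hx

lemma qc_smul_left (s : F) (x y : A) (t : ℤ) : qc (s • x) y t = s • qc x y t := by
  simp only [qc, smul_mul_assoc, mul_smul_comm, smul_sub]
  rw [smul_comm]

lemma qc_smul_right (s : F) (x y : A) (t : ℤ) : qc x (s • y) t = s • qc x y t := by
  simp only [qc, smul_mul_assoc, mul_smul_comm, smul_sub]
  rw [smul_comm]

lemma qc_sub_left (x x' y : A) (t : ℤ) : qc (x - x') y t = qc x y t - qc x' y t := by
  simp only [qc, sub_mul, mul_sub, smul_sub]; abel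

lemma qc_sub_right (x y y' : A) (t : ℤ) : qc x (y - y') t = qc x y t - qc x y' t := by
  simp only [qc, sub_mul, mul_sub, smul_sub]; abel

lemma qc_unit_left {u : A} (hu : ∀ z, u * z = z * u) (x y : A) (t : ℤ) :
    qc (x * u) y t = qc x y t * u := by
  simp only [qc, sub_mul, smul_mul_assoc, mul_assoc, hu y]

lemma qc_unit_right {u : A} (hu : ∀ z, u * z = z * u) (x y : A) (t : ℤ) :
    qc x (y * u) t = qc x y t * u := by
  simp only [qc, sub_mul, smul_mul_assoc, mul_assoc, hu x]

def Rd (C K : Aˣ) (Θ : ℤ → A) (k l : ℤ) : A :=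
  (v ^ (-2 : ℤ)) • (Θ (l - k + 1) * ((C ^ k * K : Aˣ) : A))
    - (v ^ (-4 : ℤ)) • (Θ (l - k - 1) * ((C ^ (k + 1) * K : Aˣ) : A))
    + (v ^ (-2 : ℤ)) • (Θ (k - l + 1) * ((C ^ l * K : Aˣ) : A))
    - (v ^ (-4 : ℤ)) • (Θ (k - l - 1) * ((C ^ (l + 1) * K : Aˣ) : A))

def Ld (B : ℤ → A) (k l : ℤ) : A :=
  qc (B k) (B (l + 1)) (-2) - (v ^ (-2 : ℤ)) • qc (B (k + 1)) (B l) 2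

lemma Rd_shift (C K : Aˣ) (hCK : (K * C : Aˣ) = C * K) (Θ : ℤ → A) (mm k l : ℤ) :
    Rd C K Θ (k + mm) l = Rd C K Θ k (l - mm) * ((C ^ mm : Aˣ) : A) := by
  have hKC : Commute K C := hCK
  have hcu : ∀ j : ℤ, (C ^ j * K) * C ^ mm = C ^ (j + mm) * K := by
    intro j
    rw [mul_assoc, ((hKC.zpow_right mm).eq : K * C ^ mm = C ^ mm * K), ← mul_assoc,
      ← zpow_add]
  have hval : ∀ (u w : Aˣ), ((u : A) * (w : A)) = ((u * w : Aˣ) : A) := fun u w => rfl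
  simp only [Rd, sub_mul, add_mul, smul_mul_assoc, mul_assoc, hval, hcu]
  ring_nf

end Com
/-- `[H_m, Θ_n] = 0` and `[H_m, H'_n] = 0` for all `m, n ≥ 1`. -/
theorem stmt18 (A : Type) [Ring A] [Algebra F A] (C K : Aˣ)
    (hC : ∀ x : A, (C : A) * x = x * C) (hK : ∀ x : A, (K : A) * x = x * K)
    (B : ℤ → A) (Θ : ℤ → A)
    (h0 : Θ 0 = ((v - v⁻¹)⁻¹ : F) • (1 : A)) (hneg : ∀ n : ℤ, n < 0 → Θ n = 0)
    (hrel : ∀ k l : ℤ,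
      qc (B k) (B (l + 1)) (-2) - (v ^ (-2 : ℤ)) • qc (B (k + 1)) (B l) 2
      = (v ^ (-2 : ℤ)) • (Θ (l - k + 1) * ((C ^ k * K : Aˣ) : A))
        - (v ^ (-4 : ℤ)) • (Θ (l - k - 1) * ((C ^ (k + 1) * K : Aˣ) : A))
        + (v ^ (-2 : ℤ)) • (Θ (k - l + 1) * ((C ^ l * K : Aˣ) : A))
        - (v ^ (-4 : ℤ)) • (Θ (k - l - 1) * ((C ^ (l + 1) * K : Aˣ) : A)))
    (H : ℕ → A) (c : ℤ)
    (hH : ∀ m : ℕ, 1 ≤ m → ∀ l : ℤ,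
      H m * B l - B l * H m
      = (qnum (m * c) / (m : F)) • B (l + m)
        - (qnum (m * c) / (m : F)) • (B (l - m) * ((C ^ m : Aˣ) : A)))
    (H' : ℕ → A)
    (hcomm : ∀ m n : ℕ, 1 ≤ m → 1 ≤ n → H' m * H' n = H' n * H' m)
    (hexp : ∀ n : ℕ, 1 ≤ n →
      (v - v⁻¹) • Θ (n : ℤ) =
        ∑ k ∈ Finset.Icc 1 n,
          ((v - v⁻¹) ^ k / (k.factorial : F)) •
            ∑ f ∈ (Finset.Nat.antidiagonalTuple k n).filter (fun f => ∀ t, 1 ≤ f t),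
              (List.ofFn (fun t => H' (f t))).prod)
    (m n : ℕ) (hm : 1 ≤ m) (hn : 1 ≤ n) :
    H m * Θ (n : ℤ) - Θ (n : ℤ) * H m = 0 ∧ H m * H' n - H' n * H m = 0 := by
  classical
  set a : F := qnum (m * c) / (m : F) with ha
  set Cm : A := ((C ^ m : Aˣ) : A) with hCmdef
  -- centrality facts
  have hCKu : (K * C : Aˣ) = C * K := Units.ext (by
    simp only [Units.val_mul]; exact (hC (K : A)).symm)
  have hucen : ∀ j : ℤ, ∀ z : A, ((C ^ j * K : Aˣ) : A) * z = z * ((C ^ j * K : Aˣ) : A) := by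
    intro j z
    have h1 : Commute z ((C : Aˣ) : A) := (hC z).symm
    have h2 : Commute z (((C ^ j : Aˣ)) : A) := h1.units_zpow_right j
    have h3 : Commute z ((K : Aˣ) : A) := (hK z).symm
    have h4 : Commute z (((C ^ j * K : Aˣ)) : A) := by
      rw [Units.val_mul]; exact h2.mul_right h3
    exact h4.symm
  have hCmcen : ∀ z : A, Cm * z = z * Cm := by
    intro z
    rw [hCmdef, show ((C ^ m : Aˣ) : A) = ((C : Aˣ) : A) ^ m from Units.val_pow_eq_pow_val C m]
    have h1 : Commute z ((C : Aˣ) : A) := (hC z).symm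
    exact (h1.pow_right m).symm
  -- the B-side commutator relation
  have hB : ∀ l : ℤ, com (H m) (B l) = a • B (l + (m : ℤ)) - a • (B (l - (m : ℤ)) * Cm) := by
    intro l
    exact hH m hm l
  have hrel' : ∀ k l : ℤ, Ld B k l = Rd C K Θ k l := by
    intro k l
    exact hrel k l
  -- the derivation identity
  have hder : ∀ k l : ℤ, com (H m) (Ld B k l)
      = a • (Ld B (k + (m : ℤ)) l + Ld B k (l + (m : ℤ))
          - Ld B (k - (m : ℤ)) l * Cm - Ld B k (l - (m : ℤ)) * Cm) := by
    intro k l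
    have e1 : ∀ x : ℤ, x + 1 + (m : ℤ) = x + (m : ℤ) + 1 := fun x => by ring
    have e2 : ∀ x : ℤ, x + 1 - (m : ℤ) = x - (m : ℤ) + 1 := fun x => by ring
    simp only [Ld, com_sub, com_smul, com_qc, hB, qc_sub_left, qc_smul_left,
      qc_unit_left hCmcen, qc_sub_right, qc_smul_right, qc_unit_right hCmcen,
      sub_mul, add_mul, smul_mul_assoc, smul_sub, smul_add, e1, e2]
    simp only [smul_smul]
    ring_nf
    abel
  -- hence H_m commutes with the Θ-side expression
  have hcomR : ∀ k l : ℤ, com (H m) (Rd C K Θ k l) = 0 := by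
    intro k l
    have h1 := hder k l
    simp only [hrel'] at h1
    have eCm : ((C ^ ((m : ℕ) : ℤ) : Aˣ) : A) = Cm := by rw [zpow_natCast]
    have e1 : Rd C K Θ (k + (m : ℤ)) l = Rd C K Θ k (l - (m : ℤ)) * Cm := by
      have := Rd_shift C K hCKu Θ (m : ℤ) k l
      rwa [eCm] at this
    have e2 : Rd C K Θ (k - (m : ℤ)) l * Cm = Rd C K Θ k (l + (m : ℤ)) := by
      have := Rd_shift C K hCKu Θ (m : ℤ) (k - (m : ℤ)) (l + (m : ℤ))
      rw [show k - (m : ℤ) + (m : ℤ) = k from by ring,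
        show l + (m : ℤ) - (m : ℤ) = l from by ring, eCm] at this
      exact this.symm
    rw [h1, e1, e2]
    rw [show Rd C K Θ k (l - (m : ℤ)) * Cm + Rd C K Θ k (l + (m : ℤ))
        - Rd C K Θ k (l + (m : ℤ)) - Rd C K Θ k (l - (m : ℤ)) * Cm = (0 : A) from by abel,
      smul_zero]
  have comΘ0 : com (H m) (Θ 0) = 0 := by
    rw [h0]
    simp [com, mul_smul_comm, smul_mul_assoc]
  have comRd_expand : ∀ k l : ℤ, com (H m) (Rd C K Θ k l)
      = (v ^ (-2 : ℤ)) • (com (H m) (Θ (l - k + 1)) * ((C ^ k * K : Aˣ) : A))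
        - (v ^ (-4 : ℤ)) • (com (H m) (Θ (l - k - 1)) * ((C ^ (k + 1) * K : Aˣ) : A))
        + (v ^ (-2 : ℤ)) • (com (H m) (Θ (k - l + 1)) * ((C ^ l * K : Aˣ) : A))
        - (v ^ (-4 : ℤ)) • (com (H m) (Θ (k - l - 1)) * ((C ^ (l + 1) * K : Aˣ) : A)) := by
    intro k l
    simp only [Rd, com_sub, com_add, com_smul]
    rw [com_unit _ (hucen k), com_unit _ (hucen (k + 1)), com_unit _ (hucen l),
      com_unit _ (hucen (l + 1))]
  have extract : ∀ (x : A) (u : Aˣ),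
      (v ^ (-2 : ℤ)) • (com (H m) x * (u : A)) = 0 → com (H m) x = 0 := by
    intro x u h
    have h1 := Fsmul_cancel (zpow_ne_zero _ v_ne_zero) h
    exact (Units.mul_left_eq_zero u).mp h1
  -- H_m commutes with each Θ_N
  have thetaN : ∀ N : ℕ, com (H m) (Θ (N : ℤ)) = 0 := by
    intro N
    induction N using Nat.strong_induction_on with
    | _ N ih =>
      rcases Nat.lt_or_ge N 3 with hN3 | hN3
      · interval_cases N
        · simpa using comΘ0
        · -- N = 1
          have hc := hcomR 0 0
          rw [comRd_expand, show (0 : ℤ) - 0 + 1 = 1 from by norm_num,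
            show (0 : ℤ) - 0 - 1 = -1 from by norm_num,
            hneg (-1) (by norm_num), com_zero] at hc
          simp only [zero_mul, smul_zero, sub_zero] at hc
          have hY : com (H m) (Θ 1) * ((C ^ (0 : ℤ) * K : Aˣ) : A) = 0 := by
            set Y := com (H m) (Θ 1) * ((C ^ (0 : ℤ) * K : Aˣ) : A) with hYdef
            have h2 : (v ^ (-2 : ℤ) : F) • (Y + Y) = 0 := by
              rw [smul_add]; exact hc
            have h3 := Fsmul_cancel (zpow_ne_zero _ v_ne_zero) h2
            have h4 : (2 : F) • Y = 0 := by rw [two_smul]; exact h3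
            exact Fsmul_cancel F_two_ne_zero h4
          have := (Units.mul_left_eq_zero _).mp hY
          simpa using this
        · -- N = 2
          have hc := hcomR 0 1
          rw [comRd_expand, show (1 : ℤ) - 0 + 1 = 2 from by norm_num,
            show (1 : ℤ) - 0 - 1 = 0 from by norm_num,
            show (0 : ℤ) - 1 + 1 = 0 from by norm_num,
            show (0 : ℤ) - 1 - 1 = -2 from by norm_num,
            hneg (-2) (by norm_num), comΘ0, com_zero] at hc
          simp only [zero_mul, smul_zero, sub_zero, add_zero] at hc
          have := extract _ _ hc
          simpa using this
      · obtain ⟨N', rfl⟩ : ∃ N', N = N' + 3 := ⟨N - 3, by omega⟩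
        have hc := hcomR 0 ((N' : ℤ) + 2)
        have ih1 : com (H m) (Θ (((N' + 1 : ℕ) : ℤ))) = 0 := ih (N' + 1) (by omega)
        rw [comRd_expand,
          show ((N' : ℤ) + 2) - 0 + 1 = ((N' + 3 : ℕ) : ℤ) from by push_cast; ring,
          show ((N' : ℤ) + 2) - 0 - 1 = ((N' + 1 : ℕ) : ℤ) from by push_cast; ring,
          show (0 : ℤ) - ((N' : ℤ) + 2) + 1 = -((N' : ℤ) + 1) from by ring,
          show (0 : ℤ) - ((N' : ℤ) + 2) - 1 = -((N' : ℤ) + 3) from by ring,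
          hneg (-((N' : ℤ) + 1)) (by omega), hneg (-((N' : ℤ) + 3)) (by omega),
          ih1, com_zero] at hc
        simp only [zero_mul, smul_zero, sub_zero, add_zero] at hc
        exact extract _ _ hc
  -- H_m commutes with each H'_N
  have hH'c : ∀ N : ℕ, 1 ≤ N → com (H m) (H' N) = 0 := by
    intro N
    induction N using Nat.strong_induction_on with
    | _ N ih =>
      intro hN
      have he := congrArg (com (H m)) (hexp N hN)
      rw [com_smul, thetaN N, smul_zero, com_sum] at he
      have hsingle : ∀ k ∈ Finset.Icc 1 N, k ≠ 1 →
          com (H m) (((v - v⁻¹) ^ k / (k.factorial : F)) •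
            ∑ f ∈ (Finset.Nat.antidiagonalTuple k N).filter (fun f => ∀ t, 1 ≤ f t),
              (List.ofFn (fun t => H' (f t))).prod) = 0 := by
        intro k hk hk1
        rw [com_smul, com_sum]
        have hz : ∀ f ∈ (Finset.Nat.antidiagonalTuple k N).filter (fun f => ∀ t, 1 ≤ f t),
            com (H m) ((List.ofFn (fun t => H' (f t))).prod) = 0 := by
          intro f hf
          rw [Finset.mem_filter] at hf
          obtain ⟨hf1, hf2⟩ := hf
          rw [Finset.Nat.mem_antidiagonalTuple] at hf1
          have hk2 : 2 ≤ k := by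
            rcases Finset.mem_Icc.mp hk with ⟨hk', _⟩; omega
          apply com_eq_zero_of_commute
          apply Commute.list_prod_right
          intro y hy
          rw [List.mem_ofFn] at hy
          obtain ⟨i, rfl⟩ := hy
          have hflt : f i < N := by
            haveI : Nontrivial (Fin k) := Fin.nontrivial_iff_two_le.mpr hk2
            obtain ⟨j, hij⟩ := exists_ne i
            have hsum : f i + f j ≤ ∑ t, f t := by
              have hsub : ({i, j} : Finset (Fin k)) ⊆ Finset.univ := Finset.subset_univ _
              have h5 := Finset.sum_le_sum_of_subset hsub (f := f)
              rwa [Finset.sum_pair (Ne.symm hij)] at h5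
            have hfj := hf2 j
            omega
          exact commute_of_com_eq_zero (ih (f i) hflt (hf2 i))
        rw [Finset.sum_eq_zero hz, smul_zero]
      rw [Finset.sum_eq_single_of_mem 1 (Finset.mem_Icc.mpr ⟨le_refl 1, hN⟩) hsingle,
        com_smul] at he
      have hpred : ∀ t : Fin 1, 1 ≤ (![N]) t := by
        intro t
        fin_cases t
        simpa using hN
      have hT1 : (∑ f ∈ (Finset.Nat.antidiagonalTuple 1 N).filter (fun f => ∀ t, 1 ≤ f t),
          (List.ofFn (fun t => H' (f t))).prod) = H' N := by
        rw [Finset.Nat.antidiagonalTuple_one, Finset.filter_singleton, if_pos hpred,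
          Finset.sum_singleton]
        simp
      rw [hT1] at he
      have hs : ((v - v⁻¹) ^ 1 / ((Nat.factorial 1 : ℕ) : F)) ≠ 0 := by
        simp [Nat.factorial]
        exact v_sub_inv_ne_zero
      exact Fsmul_cancel hs he.symm
  exact ⟨thetaN n, hH'c n hn⟩
end
end
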